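/- Let h : ℝⁿ → ℝ be continuous with support contained in the ball |x| ≤ R, and let (Mh)(x,t) = (1/|S^{n-1}|) ∫_{|θ|=1} h(x + tθ) dθ be the spherical mean. Then there is a constant C (depending on h, R, n) such that |(Mh)(x,t)| ≤ C (1+t)^{-(n-1)} for all x ∈ ℝⁿ and all t ≥ 1. -/

import Mathlib

open MeasureTheory Metric
open scoped ENNReal Pointwise

/-- The spherical mean `(Mh)(x,t) = (1/|S^{n-1}|) ∫_{|θ|=1} h(x+tθ) dθ`, where the
integral is with respect to the surface measure on the unit sphere of `ℝⁿ` and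
`|S^{n-1}| = 2π^{n/2}/Γ(n/2)`. -/
noncomputable def sphericalMean (n : ℕ) (h : EuclideanSpace ℝ (Fin n) → ℝ)
    (x : EuclideanSpace ℝ (Fin n)) (t : ℝ) : ℝ :=
  (2 * Real.pi ^ ((n : ℝ) / 2) / Real.Gamma ((n : ℝ) / 2))⁻¹ *
    ∫ θ : sphere (0 : EuclideanSpace ℝ (Fin n)) 1,
      h (x + t • (θ : EuclideanSpace ℝ (Fin n)))
      ∂((volume : Measure (EuclideanSpace ℝ (Fin n))).toSphere)


/-- Cap area bound: a measurable subset of the unit sphere contained in a ball of radius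
`r ≤ 1` around a point of the sphere has surface measure at most `C r^(n-1)`. -/
lemma cap_bound {n : ℕ} (hn : 1 < n) (p : EuclideanSpace ℝ (Fin n)) (hp : ‖p‖ = 1)
    {r : ℝ} (hr0 : 0 < r) (hr1 : r ≤ 1) (A : Set (sphere (0 : EuclideanSpace ℝ (Fin n)) 1))
    (hA : MeasurableSet A)
    (hAr : ∀ θ ∈ A, dist ((θ : EuclideanSpace ℝ (Fin n))) p ≤ r) :
    ((volume : Measure (EuclideanSpace ℝ (Fin n))).toSphere A).toReal ≤
      ((n : ℝ) * 2 ^ (n + 1) * (volume (ball (0 : EuclideanSpace ℝ (Fin n)) 1)).toReal) *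
        r ^ (n - 1) := by
  set N : ℕ := ⌊1 / r⌋₊ with hN
  set V : ℝ≥0∞ := volume (ball (0 : EuclideanSpace ℝ (Fin n)) 1) with hV
  have hVlt : V < ⊤ := measure_ball_lt_top
  have hsub : (Set.Ioo (0:ℝ) 1) • ((↑) '' A : Set (EuclideanSpace ℝ (Fin n))) ⊆
      ⋃ i ∈ Finset.range (N + 1), closedBall (((i : ℝ) * r) • p) (2 * r) := by
    intro y hy
    rw [Set.mem_smul] at hy
    obtain ⟨c, hc, z, hz, rfl⟩ := hy
    obtain ⟨θ, hθA, rfl⟩ := hz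
    have hc0 : 0 < c := hc.1
    have hc1 : c < 1 := hc.2
    set i : ℕ := ⌊c / r⌋₊ with hi
    have hiN : i ≤ N := Nat.floor_mono (by gcongr)
    have hir : (i : ℝ) * r ≤ c := by
      rw [← le_div_iff₀ hr0]
      exact Nat.floor_le (by positivity)
    have hir' : c - (i : ℝ) * r < r := by
      have := Nat.lt_floor_add_one (c / r)
      have : c / r < i + 1 := this
      nlinarith [(div_lt_iff₀ hr0).1 this]
    refine Set.mem_biUnion (Finset.mem_range.2 (Nat.lt_succ_of_le hiN)) ?_
    rw [mem_closedBall]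
    calc dist (c • (θ : EuclideanSpace ℝ (Fin n))) (((i : ℝ) * r) • p)
        ≤ dist (c • (θ : EuclideanSpace ℝ (Fin n))) (c • p) + dist (c • p) (((i : ℝ) * r) • p) := dist_triangle _ _ _
      _ ≤ 2 * r := by
          have e1 : dist (c • (θ : EuclideanSpace ℝ (Fin n))) (c • p)
              = c * dist ((θ : EuclideanSpace ℝ (Fin n))) p := by
            rw [dist_smul₀, Real.norm_eq_abs, abs_of_pos hc0]
          have e2 : dist (c • p) (((i : ℝ) * r) • p) = |c - (i : ℝ) * r| * ‖p‖ := by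
            rw [dist_eq_norm, ← sub_smul, norm_smul, Real.norm_eq_abs]
          rw [e1, e2, hp, mul_one]
          have h3 : |c - (i : ℝ) * r| ≤ r := by
            rw [abs_of_nonneg (by linarith)]; linarith
          have h4 := hAr θ hθA
          have h5 : (0:ℝ) ≤ dist ((θ : EuclideanSpace ℝ (Fin n))) p := dist_nonneg
          nlinarith
  have happ : (volume : Measure (EuclideanSpace ℝ (Fin n))).toSphere A
      = Module.finrank ℝ (EuclideanSpace ℝ (Fin n)) * volume ((Set.Ioo (0:ℝ) 1) • ((↑) '' A : Set (EuclideanSpace ℝ (Fin n)))) :=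
    Measure.toSphere_apply' _ hA
  have hcover : volume ((Set.Ioo (0:ℝ) 1) • ((↑) '' A : Set (EuclideanSpace ℝ (Fin n)))) ≤
      (N + 1 : ℕ) * (ENNReal.ofReal ((2 * r) ^ n) * V) := by
    refine (measure_mono hsub).trans ?_
    refine (measure_biUnion_finset_le _ _).trans ?_
    have hball : ∀ i : ℕ, volume (closedBall (((i:ℝ) * r) • p) (2 * r))
        = ENNReal.ofReal ((2 * r) ^ n) * V := by
      intro i
      rw [Measure.addHaar_closedBall _ _ (by positivity)]
      congr 2
      rw [finrank_euclideanSpace_fin]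
    simp only [hball, Finset.sum_const, Finset.card_range, nsmul_eq_mul]
    exact le_rfl
  have htot : (volume : Measure (EuclideanSpace ℝ (Fin n))).toSphere A ≤
      (n : ℝ≥0∞) * ((N + 1 : ℕ) * (ENNReal.ofReal ((2 * r) ^ n) * V)) := by
    rw [happ, finrank_euclideanSpace_fin]
    exact mul_le_mul_right hcover _
  have hfin : ((n : ℝ≥0∞) * ((N + 1 : ℕ) * (ENNReal.ofReal ((2 * r) ^ n) * V))) ≠ ⊤ := by
    refine ENNReal.mul_ne_top (ENNReal.natCast_ne_top n) (ENNReal.mul_ne_top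
      (ENNReal.natCast_ne_top _) (ENNReal.mul_ne_top ENNReal.ofReal_ne_top hVlt.ne))
  have htr : ((volume : Measure (EuclideanSpace ℝ (Fin n))).toSphere A).toReal ≤
      (n : ℝ) * (((N : ℝ) + 1) * ((2 * r) ^ n * V.toReal)) := by
    have := ENNReal.toReal_mono hfin htot
    rw [ENNReal.toReal_mul, ENNReal.toReal_mul, ENNReal.toReal_mul] at this
    simpa [ENNReal.toReal_ofReal (by positivity : (0:ℝ) ≤ (2*r)^n),
      ENNReal.toReal_add (ENNReal.natCast_ne_top N) ENNReal.one_ne_top] using this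
  refine htr.trans ?_
  have hN1 : (N : ℝ) + 1 ≤ 2 / r := by
    have h1 : (N : ℝ) ≤ 1 / r := Nat.floor_le (by positivity)
    have h2 : (1 : ℝ) ≤ 1 / r := one_le_one_div hr0 hr1
    calc (N : ℝ) + 1 ≤ 1 / r + 1 / r := by linarith
      _ = 2 / r := by ring
  have hrn : r ^ n = r ^ (n - 1) * r := by
    rw [← pow_succ]; congr 1; omega
  have hkey : ((N : ℝ) + 1) * (2 * r) ^ n ≤ 2 ^ (n + 1) * r ^ (n - 1) := by
    calc ((N : ℝ) + 1) * (2 * r) ^ n ≤ (2 / r) * (2 * r) ^ n := by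
          gcongr
      _ = 2 ^ (n + 1) * r ^ (n - 1) := by
          rw [mul_pow, hrn, pow_succ]
          field_simp
  have hVr : 0 ≤ V.toReal := ENNReal.toReal_nonneg
  calc (n : ℝ) * (((N : ℝ) + 1) * ((2 * r) ^ n * V.toReal))
      = ((n : ℝ) * V.toReal) * (((N : ℝ) + 1) * (2 * r) ^ n) := by ring
    _ ≤ ((n : ℝ) * V.toReal) * (2 ^ (n + 1) * r ^ (n - 1)) := by
        refine mul_le_mul_of_nonneg_left hkey (by positivity)
    _ = ((n : ℝ) * 2 ^ (n + 1) * V.toReal) * r ^ (n - 1) := by ring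

/-- If `h : ℝⁿ → ℝ` is continuous with support in the ball `|x| ≤ R`, then there is a
constant `C` with `|(Mh)(x,t)| ≤ C (1+t)^{-(n-1)}` for all `x` and all `t ≥ 1`. -/
theorem stmt_6 (n : ℕ) (hn : 1 < n) (R : ℝ) (h : EuclideanSpace ℝ (Fin n) → ℝ)
    (hc : Continuous h)
    (hsupp : ∀ x : EuclideanSpace ℝ (Fin n), h x ≠ 0 → ‖x‖ ≤ R) :
    ∃ C : ℝ, ∀ (x : EuclideanSpace ℝ (Fin n)) (t : ℝ), 1 ≤ t →
      |sphericalMean n h x t| ≤ C * (1 + t) ^ (-((n : ℝ) - 1)) := by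
  haveI : Nonempty (Fin n) := ⟨⟨0, by omega⟩⟩
  rcases le_or_gt R 0 with hR | hR
  · -- h is identically zero
    have hzero : ∀ x, h x = 0 := by
      intro x
      by_contra hx0
      have hx : x = 0 := norm_le_zero_iff.1 ((hsupp x hx0).trans hR)
      subst hx
      have h1 : ∀ᶠ y in nhdsWithin (0 : EuclideanSpace ℝ (Fin n)) {(0 : EuclideanSpace ℝ (Fin n))}ᶜ,
          h y ≠ 0 :=
        (hc.continuousAt.eventually_ne hx0).filter_mono nhdsWithin_le_nhds
      have h2 : ∀ᶠ y in nhdsWithin (0 : EuclideanSpace ℝ (Fin n)) {(0 : EuclideanSpace ℝ (Fin n))}ᶜ,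
          y ∈ ({(0 : EuclideanSpace ℝ (Fin n))}ᶜ : Set (EuclideanSpace ℝ (Fin n))) :=
        eventually_mem_nhdsWithin
      obtain ⟨y, hy1, hy2⟩ := (h1.and h2).exists
      exact hy2 (norm_le_zero_iff.1 ((hsupp y hy1).trans hR))
    refine ⟨0, fun x t ht => ?_⟩
    simp [sphericalMean, hzero]
  · -- main case
    obtain ⟨M₀, hM₀⟩ : ∃ C, ∀ y, ‖h y‖ ≤ C := by
      refine hc.bounded_above_of_compact_support (HasCompactSupport.intro
        (isCompact_closedBall (0 : EuclideanSpace ℝ (Fin n)) R) fun y hy => ?_)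
      by_contra h0
      exact hy (mem_closedBall_zero_iff.2 (hsupp y h0))
    set M : ℝ := max M₀ 0 with hMdef
    have hM : ∀ y, |h y| ≤ M := fun y => (hM₀ y).trans (le_max_left _ _)
    have hM0 : 0 ≤ M := le_max_right _ _
    set σ := (volume : Measure (EuclideanSpace ℝ (Fin n))).toSphere with hσ
    set Vr : ℝ := (volume (ball (0 : EuclideanSpace ℝ (Fin n)) 1)).toReal with hVr
    set K : ℝ := max ((n : ℝ) * 2 ^ (n + 1) * Vr) (σ Set.univ).toReal with hK
    have hK0 : 0 ≤ K := le_trans (by positivity) (le_max_left _ _)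
    set c : ℝ := (2 * Real.pi ^ ((n : ℝ) / 2) / Real.Gamma ((n : ℝ) / 2))⁻¹ with hcdef
    set m : ℕ := n - 1 with hm
    refine ⟨|c| * M * K * (2 * R) ^ m * 2 ^ m, fun x t ht => ?_⟩
    have ht0 : (0:ℝ) < t := lt_of_lt_of_le one_pos ht
    set r : ℝ := 2 * R / t with hr
    have hr0 : 0 < r := by positivity
    set A : Set (sphere (0 : EuclideanSpace ℝ (Fin n)) 1) :=
      {θ | ‖x + t • (θ : EuclideanSpace ℝ (Fin n))‖ ≤ R} with hA
    have hAm : MeasurableSet A := by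
      have : IsClosed A := by
        apply isClosed_le
        · fun_prop
        · fun_prop
      exact this.measurableSet
    -- surface measure of A
    have hσA : (σ A).toReal ≤ K * r ^ m := by
      rcases A.eq_empty_or_nonempty with hAe | ⟨θ₀, hθ₀⟩
      · rw [hAe]
        simp only [measure_empty, ENNReal.toReal_zero]
        positivity
      · have hθr : ∀ θ ∈ A, dist ((θ : EuclideanSpace ℝ (Fin n)))
            ((θ₀ : EuclideanSpace ℝ (Fin n))) ≤ r := by
          intro θ hθ
          have e : dist (x + t • (θ : EuclideanSpace ℝ (Fin n)))
              (x + t • (θ₀ : EuclideanSpace ℝ (Fin n)))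
              = t * dist ((θ : EuclideanSpace ℝ (Fin n))) ((θ₀ : EuclideanSpace ℝ (Fin n))) := by
            rw [dist_add_left, dist_smul₀, Real.norm_eq_abs, abs_of_pos ht0]
          have hb : dist (x + t • (θ : EuclideanSpace ℝ (Fin n)))
              (x + t • (θ₀ : EuclideanSpace ℝ (Fin n))) ≤ 2 * R := by
            have htri := dist_le_norm_add_norm (x + t • (θ : EuclideanSpace ℝ (Fin n)))
              (x + t • (θ₀ : EuclideanSpace ℝ (Fin n)))
            have h1 : ‖x + t • (θ : EuclideanSpace ℝ (Fin n))‖ ≤ R := hθ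
            have h2 : ‖x + t • (θ₀ : EuclideanSpace ℝ (Fin n))‖ ≤ R := hθ₀
            linarith
          rw [hr, le_div_iff₀ ht0]
          rw [e] at hb
          linarith
        rcases le_or_gt r 1 with hr1 | hr1
        · refine (cap_bound hn (θ₀ : EuclideanSpace ℝ (Fin n))
            (mem_sphere_zero_iff_norm.1 θ₀.2) hr0 hr1 A hAm hθr).trans ?_
          exact mul_le_mul_of_nonneg_right (le_max_left _ _) (by positivity)
        · have h1 : (σ A).toReal ≤ (σ Set.univ).toReal :=
            ENNReal.toReal_mono (measure_ne_top _ _) (measure_mono (Set.subset_univ A))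
          calc (σ A).toReal ≤ (σ Set.univ).toReal := h1
            _ = (σ Set.univ).toReal * 1 := (mul_one _).symm
            _ ≤ K * r ^ m := by
                refine mul_le_mul (le_max_right _ _) (one_le_pow₀ hr1.le) one_pos.le hK0
    -- integral bound
    set f : sphere (0 : EuclideanSpace ℝ (Fin n)) 1 → ℝ :=
      fun θ => h (x + t • (θ : EuclideanSpace ℝ (Fin n))) with hf
    have hint : ∫ θ, f θ ∂σ = ∫ θ in A, f θ ∂σ := by
      refine (setIntegral_eq_integral_of_forall_compl_eq_zero fun θ hθ => ?_).symm
      by_contra h0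
      exact hθ (hsupp _ h0)
    have hbnd : |∫ θ in A, f θ ∂σ| ≤ M * (σ A).toReal := by
      have := MeasureTheory.norm_setIntegral_le_of_norm_le_const (μ := σ) (s := A) (f := f)
        (measure_lt_top σ A) (fun θ _ => hM _)
      simpa [Measure.real] using this
    have habs : |∫ θ, f θ ∂σ| ≤ M * (K * r ^ m) := by
      rw [hint]
      refine hbnd.trans ?_
      exact mul_le_mul_of_nonneg_left hσA hM0
    -- final bound
    have hmc : ((n : ℝ) - 1) = ((m : ℕ) : ℝ) := by
      rw [hm, Nat.cast_sub hn.le]; norm_num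
    have hrpow : (1 + t) ^ (-((n : ℝ) - 1)) = ((1 + t) ^ m)⁻¹ := by
      rw [hmc, Real.rpow_neg (by linarith), Real.rpow_natCast]
    have hkey : r ^ m ≤ (2 * R) ^ m * (2 ^ m * ((1 + t) ^ m)⁻¹) := by
      have h1 : (1 + t) ^ m ≤ 2 ^ m * t ^ m := by
        rw [← mul_pow]
        exact pow_le_pow_left₀ (by linarith) (by linarith) m
      have h2 : (t ^ m)⁻¹ ≤ 2 ^ m * ((1 + t) ^ m)⁻¹ := by
        rw [← one_div, ← div_eq_mul_inv]
        rw [div_le_div_iff₀ (by positivity) (by positivity)]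
        linarith
      calc r ^ m = (2 * R) ^ m * (t ^ m)⁻¹ := by
            rw [hr, div_pow, div_eq_mul_inv]
        _ ≤ (2 * R) ^ m * (2 ^ m * ((1 + t) ^ m)⁻¹) :=
            mul_le_mul_of_nonneg_left h2 (by positivity)
    calc |sphericalMean n h x t| = |c| * |∫ θ, f θ ∂σ| := by
          rw [sphericalMean, abs_mul]
      _ ≤ |c| * (M * (K * r ^ m)) := mul_le_mul_of_nonneg_left habs (abs_nonneg c)
      _ ≤ |c| * (M * (K * ((2 * R) ^ m * (2 ^ m * ((1 + t) ^ m)⁻¹)))) := by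
          refine mul_le_mul_of_nonneg_left (mul_le_mul_of_nonneg_left
            (mul_le_mul_of_nonneg_left hkey hK0) hM0) (abs_nonneg c)
      _ = (|c| * M * K * (2 * R) ^ m * 2 ^ m) * ((1 + t) ^ m)⁻¹ := by ring
      _ = (|c| * M * K * (2 * R) ^ m * 2 ^ m) * (1 + t) ^ (-((n : ℝ) - 1)) := by
          rw [hrpow]
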